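/- Let G be a function holomorphic in a neighborhood of ∞ with a convergent expansion G(z) = 1/z + a₁/z² + a₂/z³ + ⋯ for all sufficiently large |z|, and set g(z) = G(1/z). Let ρ > 0 be such that g is holomorphic on the closed disc {|z| ≤ ρ} and has exactly one zero there (at z = 0). Then the functional inverse G^{−1} of G is well defined in a punctured neighborhood of 0, and for all w ≠ 0 of sufficiently small modulus, G^{−1}(w) = 1/w + a₁ − Σ_{n=1}^{∞} [ (1/n) · (1/(2πi)) ∮_{|z|=ρ} dz/(z² g(z)^n) ] wⁿ, where the contour integral is over the positively oriented circle of radius ρ centered at 0. -/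

import Mathlib

open MeasureTheory Complex Set
open scoped ENNReal NNReal Topology

/-- The Cauchy transform of a measure on ℝ: `G_μ(z) = ∫ dμ(t)/(z−t)`. -/
noncomputable def cauchyT (μ : Measure ℝ) (z : ℂ) : ℂ := ∫ t : ℝ, (z - (t : ℂ))⁻¹ ∂μ

/-- The cumulative distribution function of a measure on ℝ. -/
noncomputable def cdfOf (μ : Measure ℝ) (x : ℝ) : ℝ := (μ (Set.Iic x)).toReal

/-- The cumulative distribution function of the standard semicircle law. -/
noncomputable def semicircleCDF (x : ℝ) : ℝ :=
  (1 / Real.pi) * ∫ t in Set.Iic x,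
    Set.indicator (Set.Icc (-2 : ℝ) 2) (fun s => Real.sqrt (4 - s ^ 2)) t

/-- The branch of `√(z²−4)` holomorphic on the upper half-plane with `√(z²−4) ∼ z`
as `z → ∞`, given by `√(z−2)·√(z+2)` with principal square roots. -/
noncomputable def sqrtBr (z : ℂ) : ℂ := (z - 2) ^ ((1 : ℂ) / 2) * (z + 2) ^ ((1 : ℂ) / 2)

/-- The Cauchy transform of the semicircle law: `G_Φ(z) = (z − √(z²−4))/2`. -/
noncomputable def Gsc (z : ℂ) : ℂ := (z - sqrtBr z) / 2


private lemma circleIntegral_add' {f g : ℂ → ℂ} {c : ℂ} {R : ℝ} (hf : CircleIntegrable f c R)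
    (hg : CircleIntegrable g c R) :
    (∮ z in C(c, R), (f z + g z)) = (∮ z in C(c, R), f z) + ∮ z in C(c, R), g z := by
  simp only [circleIntegral, smul_add, intervalIntegral.integral_add hf.out hg.out]

set_option maxHeartbeats 2000000 in
/-- **Modified Lagrange inversion formula.** If `G(z) = 1/z + a₁/z² + ⋯` near `∞`,
`g(z) = G(1/z)` (extended by `g(0) = 0`) is holomorphic on the closed disc of radius `ρ` and has
exactly one zero there, then the functional inverse of `G` exists in a punctured neighborhood of
`0` and has the Laurent expansion
`G⁻¹(w) = 1/w + a₁ − Σ_{n≥1} [(1/n)(1/(2πi)) ∮_{|z|=ρ} dz/(z²g(z)ⁿ)] wⁿ`. -/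
theorem lagrange_inversion_at_infinity (G g : ℂ → ℂ) (a : ℕ → ℂ) (R ρ : ℝ)
    (hR : 0 < R) (hρ : 0 < ρ) (ha0 : a 0 = 1)
    (hGexp : ∀ z : ℂ, R < ‖z‖ → HasSum (fun n : ℕ => a n / z ^ (n + 1)) (G z))
    (hg : ∀ z : ℂ, z ≠ 0 → ‖z‖ ≤ ρ → g z = G (1 / z))
    (hghol : DifferentiableOn ℂ g (Metric.closedBall 0 ρ))
    (hzero : ∀ z ∈ Metric.closedBall (0 : ℂ) ρ, g z = 0 ↔ z = 0) :
    ∃ ε > 0, ∃ Ginv : ℂ → ℂ,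
      (∀ w : ℂ, w ≠ 0 → ‖w‖ < ε → G (Ginv w) = w) ∧
      (∀ w : ℂ, w ≠ 0 → ‖w‖ < ε →
        HasSum
          (fun n : ℕ =>
            -(((1 : ℂ) / (n + 1)) * ((2 * Real.pi * Complex.I)⁻¹ *
                ∮ z in C(0, ρ), 1 / (z ^ 2 * g z ^ (n + 1))) * w ^ (n + 1)))
          (Ginv w - 1 / w - a 1)) := by
  classical
  have htwopi : (2 * (Real.pi : ℂ) * Complex.I) ≠ 0 := by
    simp [Real.pi_ne_zero, Complex.I_ne_zero]
  have hball : ∀ z : ℂ, z ∈ Metric.closedBall (0 : ℂ) ρ ↔ ‖z‖ ≤ ρ := by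
    intro z; simp [Metric.mem_closedBall, Complex.dist_eq]
  have hg0 : g 0 = 0 := (hzero 0 (by simp [hρ.le])).mpr rfl
  have hgne : ∀ z : ℂ, ‖z‖ ≤ ρ → z ≠ 0 → g z ≠ 0 := fun z hz hz0 h =>
    hz0 ((hzero z ((hball z).mpr hz)).mp h)
  have hgan : AnalyticOnNhd ℂ g (Metric.ball 0 ρ) :=
    (hghol.mono Metric.ball_subset_closedBall).analyticOnNhd Metric.isOpen_ball
  have hmemball : ∀ z : ℂ, z ∈ Metric.ball (0 : ℂ) ρ ↔ ‖z‖ < ρ := by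
    intro z; simp [Metric.mem_ball, Complex.dist_eq]
  have hgda : ∀ z : ℂ, ‖z‖ < ρ → DifferentiableAt ℂ g z := fun z hz =>
    (hgan z ((hmemball z).mpr hz)).differentiableAt
  -- the function u(z) = g(z)/z
  set u : ℂ → ℂ := fun z => if z = 0 then 1 else g z / z with hu_def
  have hu0 : u 0 = 1 := if_pos rfl
  have hune : ∀ z : ℂ, z ≠ 0 → u z = g z / z := fun z hz => if_neg hz
  have hgu : ∀ z : ℂ, g z = z * u z := by
    intro z
    by_cases hz : z = 0
    · simp [hz, hg0]
    · rw [hune z hz]; field_simp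
  have hune0 : ∀ z : ℂ, ‖z‖ ≤ ρ → u z ≠ 0 := by
    intro z hz
    by_cases hz0 : z = 0
    · simp [hz0, hu0]
    · rw [hune z hz0]
      exact div_ne_zero (hgne z hz hz0) hz0
  -- power series of u at 0
  set r₀ : ℝ := min ρ R⁻¹ with hr₀_def
  have hr₀ : 0 < r₀ := lt_min hρ (inv_pos.mpr hR)
  have huser : ∀ z : ℂ, ‖z‖ < r₀ → HasSum (fun n => a n * z ^ n) (u z) := by
    intro z hz
    by_cases hz0 : z = 0
    · subst hz0
      rw [hu0]
      have h0 : (fun n : ℕ => a n * 0 ^ n) = fun n : ℕ => if n = 0 then 1 else 0 := by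
        funext n
        rcases n with _ | n
        · simp [ha0]
        · simp
      rw [h0]
      simpa using hasSum_ite_eq (0 : ℕ) (1 : ℂ)
    · have hz1 : R < ‖1 / z‖ := by
        rw [norm_div, norm_one]
        rw [lt_div_iff₀ (norm_pos_iff.mpr hz0)]
        calc R * ‖z‖ < R * R⁻¹ := by
              apply mul_lt_mul_of_pos_left _ hR
              exact lt_of_lt_of_le hz (min_le_right _ _)
          _ = 1 := mul_inv_cancel₀ hR.ne'
      have h1 := hGexp (1 / z) hz1
      rw [← hg z hz0 (le_of_lt (lt_of_lt_of_le hz (min_le_left _ _)))] at h1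
      have h2 : (fun n : ℕ => a n / (1 / z) ^ (n + 1)) = fun n : ℕ => a n * z ^ n * z := by
        funext n
        rw [one_div, inv_pow, div_inv_eq_mul]
        ring
      rw [h2] at h1
      have h3 := h1.div_const z
      rw [hune z hz0]
      have h4 : (fun n : ℕ => a n * z ^ n * z / z) = fun n : ℕ => a n * z ^ n := by
        funext n; field_simp
      rwa [h4] at h3

  have huan0 : AnalyticAt ℂ u 0 ∧ deriv u 0 = a 1 := by
    set p : FormalMultilinearSeries ℂ ℂ ℂ := FormalMultilinearSeries.ofScalars ℂ a with hp_def
    set r₂ : ℝ := r₀ / 2 with hr₂_def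
    have hr₂0 : 0 < r₂ := half_pos hr₀
    have hr₂r₀ : r₂ < r₀ := half_lt_self hr₀
    have habs : ‖(r₂ : ℂ)‖ = r₂ := by
      rw [Complex.norm_real, Real.norm_eq_abs, abs_of_pos hr₂0]
    have hsum : Summable fun n => a n * (r₂ : ℂ) ^ n :=
      (huser (r₂ : ℂ) (by rw [habs]; exact hr₂r₀)).summable
    have htend : Filter.Tendsto (fun n => ‖a n * (r₂ : ℂ) ^ n‖) Filter.atTop (nhds 0) := by
      simpa using hsum.tendsto_atTop_zero.norm
    obtain ⟨C, hC⟩ : ∃ C : ℝ, ∀ n : ℕ, ‖a n * (r₂ : ℂ) ^ n‖ ≤ C := by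
      obtain ⟨C, hC⟩ := htend.bddAbove_range
      exact ⟨C, fun n => hC ⟨n, rfl⟩⟩
    have hnorm : ∀ n : ℕ, ‖a n * (r₂ : ℂ) ^ n‖ = ‖p n‖ * r₂ ^ n := by
      intro n
      rw [norm_mul, norm_pow, hp_def, FormalMultilinearSeries.ofScalars_norm]
      simp only [habs]
    have hfp : HasFPowerSeriesOnBall u p 0 (ENNReal.ofReal r₂) := by
      refine ⟨?_, by simpa using hr₂0, ?_⟩
      · have h1 : (r₂.toNNReal : ℝ≥0∞) ≤ p.radius := by
          apply p.le_radius_of_bound C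
          intro n
          rw [Real.coe_toNNReal _ hr₂0.le, ← hnorm n]
          exact hC n
        simpa [ENNReal.ofReal] using h1
      · intro y hy
        rw [EMetric.mem_ball, edist_zero_right, ← ofReal_norm] at hy
        have hy' : ‖y‖ < r₂ :=
          (ENNReal.ofReal_lt_ofReal_iff_of_nonneg (norm_nonneg y)).mp hy
        have := huser y (hy'.trans hr₂r₀)
        rw [zero_add]
        refine HasSum.congr_fun this fun n => ?_
        rw [hp_def, FormalMultilinearSeries.ofScalars_apply_eq, smul_eq_mul]
    have hfa : HasFPowerSeriesAt u p 0 := hfp.hasFPowerSeriesAt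
    refine ⟨⟨p, hfa⟩, ?_⟩
    rw [hfa.deriv]
    show (p 1) (fun _ => (1 : ℂ)) = a 1
    rw [hp_def, FormalMultilinearSeries.ofScalars_apply_eq, smul_eq_mul]
    ring
  obtain ⟨huan0, hderivu0⟩ := huan0
  -- differentiability of u
  have huda : ∀ z : ℂ, ‖z‖ < ρ → DifferentiableAt ℂ u z := by
    intro z hz
    by_cases hz0 : z = 0
    · rw [hz0]; exact huan0.differentiableAt
    · have hev : (fun y => g y / y) =ᶠ[nhds z] u := by
        filter_upwards [isOpen_ne.mem_nhds hz0] with y hy using (hune y hy).symm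
      exact ((hgda z hz).div differentiableAt_id hz0).congr_of_eventuallyEq hev.symm
  have hudo : DifferentiableOn ℂ u (Metric.ball 0 ρ) := fun z hz =>
    (huda z ((hmemball z).mp hz)).differentiableWithinAt
  have huan : AnalyticOnNhd ℂ u (Metric.ball 0 ρ) := hudo.analyticOnNhd Metric.isOpen_ball
  have hderivg : ∀ z : ℂ, ‖z‖ < ρ → deriv g z = u z + z * deriv u z := by
    intro z hz
    have h1 : HasDerivAt (fun y => y * u y) (1 * u z + z * deriv u z) z :=
      (hasDerivAt_id z).mul (huda z hz).hasDerivAt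
    have h2 : (fun y => y * u y) = g := funext fun y => (hgu y).symm
    rw [h2] at h1
    rw [h1.deriv]; ring
  have hderivg0 : deriv g 0 = 1 := by
    rw [hderivg 0 (by simpa using hρ), hu0, hderivu0]; ring
  have hdgan : AnalyticOnNhd ℂ (deriv g) (Metric.ball 0 ρ) := hgan.deriv
  have hduan : AnalyticOnNhd ℂ (deriv u) (Metric.ball 0 ρ) := huan.deriv
  -- local inverse
  have hgstrict : HasStrictDerivAt g 1 0 := by
    obtain ⟨pg, hpg⟩ := hgan 0 (by simp [hρ])
    have h : HasStrictDerivAt g (pg.coeff 1) 0 := hpg.hasStrictDerivAt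
    have e : pg.coeff 1 = 1 := by rw [← hderivg0]; exact hpg.deriv.symm
    rwa [e] at h
  set hfd := hgstrict.hasStrictFDerivAt_equiv one_ne_zero with hfd_def
  set E := hfd.toOpenPartialHomeomorph g with hE_def
  have hEcoe : ∀ z : ℂ, E z = g z := fun z => congrFun hfd.toOpenPartialHomeomorph_coe z
  have hE0 : (0 : ℂ) ∈ E.source := hfd.mem_toOpenPartialHomeomorph_source
  -- choose s
  obtain ⟨s, hs0, hsρ, hsub⟩ : ∃ s : ℝ, 0 < s ∧ s < ρ ∧
      Metric.closedBall (0 : ℂ) s ⊆ E.source ∩ {z : ℂ | deriv g z ≠ 0} := by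
    have h1 : E.source ∈ nhds (0 : ℂ) := E.open_source.mem_nhds hE0
    have h2 : {z : ℂ | deriv g z ≠ 0} ∈ nhds (0 : ℂ) := by
      have hc : ContinuousAt (deriv g) 0 :=
        ((hdgan 0 (by simp [hρ])).continuousAt)
      have := hc.preimage_mem_nhds (t := {(0 : ℂ)}ᶜ)
        (by rw [hderivg0]; exact compl_singleton_mem_nhds one_ne_zero)
      simpa [Set.preimage, Set.compl_def] using this
    obtain ⟨δ, hδ0, hδ⟩ := Metric.mem_nhds_iff.mp (Filter.inter_mem h1 h2)
    refine ⟨min (δ / 2) (ρ / 2), lt_min (half_pos hδ0) (half_pos hρ), ?_, ?_⟩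
    · exact lt_of_le_of_lt (min_le_right _ _) (half_lt_self hρ)
    · refine subset_trans ?_ hδ
      intro z hz
      rw [Metric.mem_closedBall] at hz
      rw [Metric.mem_ball]
      exact lt_of_le_of_lt (hz.trans (min_le_left _ _)) (half_lt_self hδ0)
  set r : ℝ := (s + ρ) / 2 with hr_def
  have hsr : s < r := by rw [hr_def]; linarith
  have hrρ : r < ρ := by rw [hr_def]; linarith
  have hr0 : 0 < r := lt_trans hs0 hsr
  clear_value r
  have hsphere : ∀ z : ℂ, z ∈ Metric.sphere (0 : ℂ) r ↔ ‖z‖ = r := by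
    intro z; simp [Metric.mem_sphere, Complex.dist_eq]
  -- min of ‖g‖ on the annulus K
  set K : Set ℂ := Metric.closedBall (0 : ℂ) r \ Metric.ball 0 s with hK_def
  have hKsub : K ⊆ Metric.closedBall (0 : ℂ) ρ := fun z hz =>
    Metric.closedBall_subset_closedBall hrρ.le hz.1
  obtain ⟨m, hm0, hmle⟩ : ∃ m : ℝ, 0 < m ∧ ∀ z : ℂ, s ≤ ‖z‖ → ‖z‖ ≤ r →
      m ≤ ‖g z‖ := by
    have hKc : IsCompact K := (isCompact_closedBall _ _).diff Metric.isOpen_ball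
    have hKne : ((r : ℂ)) ∈ K := by
      constructor
      · simp [Metric.mem_closedBall, Complex.dist_eq, Complex.norm_real, Real.norm_eq_abs, abs_of_pos hr0]
      · simp [Metric.mem_ball, Complex.dist_eq, Complex.norm_real, Real.norm_eq_abs, abs_of_pos hr0]
        linarith
    obtain ⟨z₀, hz₀K, hz₀min⟩ := hKc.exists_isMinOn ⟨_, hKne⟩
      ((hghol.continuousOn.mono hKsub).norm)
    have hz₀0 : z₀ ≠ 0 := by
      intro h
      have := hz₀K.2
      rw [h] at this
      exact this (by simpa [Metric.mem_ball] using hs0)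
    refine ⟨‖g z₀‖, ?_, ?_⟩
    · have : g z₀ ≠ 0 := hgne z₀ (by simpa [Metric.mem_closedBall, Complex.dist_eq]
        using (hKsub hz₀K)) hz₀0
      exact norm_pos_iff.mpr this
    · intro z h1 h2
      have hzK : z ∈ K := by
        constructor
        · simpa [Metric.mem_closedBall, Complex.dist_eq] using h2
        · simp only [Metric.mem_ball, Complex.dist_eq, sub_zero]
          exact not_lt.mpr h1
      exact hz₀min hzK
  -- max of ‖deriv g‖ on the sphere
  have hsp : Metric.sphere (0 : ℂ) r ⊆ Metric.ball 0 ρ := fun z hz => by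
    rw [hmemball]
    rw [(hsphere z).mp hz]
    exact hrρ
  obtain ⟨M, hMle⟩ : ∃ M : ℝ, ∀ z : ℂ, ‖z‖ = r → ‖deriv g z‖ ≤ M := by
    obtain ⟨zM, hzM, hzMmax⟩ := (isCompact_sphere (0 : ℂ) r).exists_isMaxOn
      (NormedSpace.sphere_nonempty.mpr hr0.le)
      ((hdgan.continuousOn.mono hsp).norm)
    refine ⟨‖deriv g zM‖, fun z hz => ?_⟩
    exact hzMmax ((hsphere z).mpr hz)
  -- ε₁ from continuity of the local inverse
  obtain ⟨ε₁, hε₁0, hε₁⟩ : ∃ ε₁ : ℝ, 0 < ε₁ ∧ ∀ w : ℂ, ‖w‖ < ε₁ →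
      w ∈ E.target ∧ ‖E.symm w‖ < s := by
    have hE00 : E 0 = 0 := by rw [hEcoe 0, hg0]
    have hEt0 : (0 : ℂ) ∈ E.target := hE00 ▸ E.map_source hE0
    have hsymm0 : E.symm 0 = 0 := by
      have h := E.left_inv hE0
      rwa [hE00] at h
    have hsymmc : ContinuousAt E.symm 0 :=
      E.continuousOn_symm.continuousAt (E.open_target.mem_nhds hEt0)
    have hU : (E.target ∩ E.symm ⁻¹' Metric.ball 0 s) ∈ nhds (0 : ℂ) := by
      refine Filter.inter_mem (E.open_target.mem_nhds hEt0) ?_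
      apply hsymmc.preimage_mem_nhds
      rw [hsymm0]
      exact Metric.ball_mem_nhds 0 hs0
    obtain ⟨ε₁, hε₁0, hε₁⟩ := Metric.mem_nhds_iff.mp hU
    refine ⟨ε₁, hε₁0, fun w hw => ?_⟩
    have hwU := hε₁ (by simpa [Metric.mem_ball, Complex.dist_eq] using hw)
    exact ⟨hwU.1, by simpa [Metric.mem_ball, Complex.dist_eq] using hwU.2⟩
  -- the inverse function
  set I : ℂ → ℂ := fun w =>
    (2 * Real.pi * Complex.I)⁻¹ * ∮ z in C(0, r), deriv g z / (z * (g z - w)) with hI_def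
  have key : ∀ w : ℂ, w ≠ 0 → ‖w‖ < min ε₁ m →
      (G (1 / w + I w) = w ∧ HasSum (fun n : ℕ =>
        -(((1 : ℂ) / (n + 1)) * ((2 * Real.pi * Complex.I)⁻¹ *
            ∮ z in C(0, ρ), 1 / (z ^ 2 * g z ^ (n + 1))) * w ^ (n + 1)))
        ((1 / w + I w) - 1 / w - a 1)) := by
    intro w hw0 hwε
    have hwm : ‖w‖ < m := lt_of_lt_of_le hwε (min_le_right _ _)
    obtain ⟨hwT, hbs⟩ := hε₁ w (lt_of_lt_of_le hwε (min_le_left _ _))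
    set b := E.symm w with hb_def
    have hgb : g b = w := by
      have h := E.right_inv hwT
      rwa [hEcoe] at h
    have hbne : b ≠ 0 := fun h => hw0 (by rw [← hgb, h, hg0])
    have hbr : ‖b‖ < r := lt_trans hbs hsr
    have hbρ : ‖b‖ < ρ := lt_trans hbr hrρ
    have hbsub := hsub (by simpa [Metric.mem_closedBall, Complex.dist_eq] using hbs.le)
    have huniq : ∀ z : ℂ, ‖z‖ ≤ r → g z = w → z = b := by
      intro z hzr hgz
      by_cases hzs : ‖z‖ < s
      · have hz1 := hsub (by simpa [Metric.mem_closedBall, Complex.dist_eq] using hzs.le)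
        apply E.injOn hz1.1 hbsub.1
        show E z = E b
        rw [hEcoe, hEcoe, hgz, hgb]
      · exfalso
        have h2 := hmle z (not_lt.mp hzs) hzr
        rw [hgz] at h2
        exact absurd hwm (not_lt.mpr h2)
    -- the factorization g z - w = (z - b) * q z
    set q : ℂ → ℂ := dslope (fun z => g z - w) b with hq_def
    have hqb : q b = deriv g b := by
      rw [hq_def, dslope_same]
      exact deriv_sub_const _
    have hqz : ∀ z : ℂ, z ≠ b → q z = (g z - w) / (z - b) := by
      intro z hz
      rw [hq_def, dslope_of_ne _ hz, slope_def_field, hgb]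
      simp
    have hfac : ∀ z : ℂ, g z - w = (z - b) * q z := by
      intro z
      by_cases hz : z = b
      · rw [hz, hgb]; simp
      · rw [hqz z hz, mul_div_cancel₀ _ (sub_ne_zero.mpr hz)]
    have hqda : ∀ z : ℂ, ‖z‖ < ρ → DifferentiableAt ℂ q z := by
      intro z hz
      by_cases hzb : z = b
      · subst hzb
        have hfan : AnalyticAt ℂ (fun y => g y - w) b := (hgan b ((hmemball b).mpr hz)).sub analyticAt_const
        obtain ⟨pf, hpf⟩ := hfan
        exact (hpf.has_fpower_series_dslope_fslope).differentiableAt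
      · have hev : (fun y => (g y - w) / (y - b)) =ᶠ[nhds z] q := by
          filter_upwards [isOpen_ne.mem_nhds hzb] with y hy using (hqz y hy).symm
        exact (((hgda z hz).sub_const w).div
          (differentiableAt_id.sub_const b) (sub_ne_zero.mpr hzb)).congr_of_eventuallyEq hev.symm
    have hqdo : DifferentiableOn ℂ q (Metric.ball 0 ρ) := fun z hz =>
      (hqda z ((hmemball z).mp hz)).differentiableWithinAt
    have hqan : AnalyticOnNhd ℂ q (Metric.ball 0 ρ) := hqdo.analyticOnNhd Metric.isOpen_ball
    have hqne : ∀ z : ℂ, ‖z‖ ≤ r → q z ≠ 0 := by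
      intro z hz
      by_cases hzb : z = b
      · rw [hzb, hqb]
        exact hbsub.2
      · rw [hqz z hzb]
        refine div_ne_zero (fun h => hzb (huniq z hz (by rwa [sub_eq_zero] at h)))
          (sub_ne_zero.mpr hzb)
    have hderivgq : ∀ z : ℂ, ‖z‖ < ρ → deriv g z = q z + (z - b) * deriv q z := by
      intro z hz
      have h1 : HasDerivAt (fun y => w + (y - b) * q y)
          (0 + (1 * q z + (z - b) * deriv q z)) z :=
        (hasDerivAt_const z w).add
          (((hasDerivAt_id z).sub_const b).mul (hqda z hz).hasDerivAt)
      have h2 : (fun y => w + (y - b) * q y) = g := by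
        funext y
        rw [← hfac y]; ring
      rw [h2] at h1
      rw [h1.deriv]; ring
    have hq0 : q 0 = w / b := by
      rw [hqz 0 (Ne.symm hbne), hg0]
      rw [zero_sub, zero_sub, neg_div_neg_eq]
    have hdq0 : deriv q 0 = (w / b - 1) / b := by
      have h := hderivgq 0 (by simpa using hρ)
      rw [hderivg0, hq0] at h
      field_simp at h ⊢
      linear_combination h
    -- evaluation of the integral I w
    have hbball : b ∈ Metric.ball (0 : ℂ) r := by
      simpa [Metric.mem_ball, Complex.dist_eq] using hbr
    have h0ball : (0 : ℂ) ∈ Metric.ball (0 : ℂ) r := by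
      simpa [Metric.mem_ball] using hr0
    have hsne : ∀ z ∈ Metric.sphere (0 : ℂ) r, z ≠ 0 := by
      intro z hz h0
      rw [h0] at hz
      rw [hsphere] at hz
      simp at hz
      exact hr0.ne hz
    have hsnb : ∀ z ∈ Metric.sphere (0 : ℂ) r, z ≠ b := by
      intro z hz hb
      rw [hsphere] at hz
      rw [← hb] at hbr
      rw [hz] at hbr
      exact lt_irrefl r hbr
    have hcsub : Metric.closedBall (0 : ℂ) r ⊆ Metric.ball (0 : ℂ) ρ :=
      fun z hz => lt_of_le_of_lt (by simpa [Metric.mem_closedBall] using hz)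
        hrρ |> fun h => by simpa [Metric.mem_ball] using h
    have hIw : I w = 1 / b - 1 / w := by
      have hcongr : Set.EqOn (fun z => deriv g z / (z * (g z - w)))
          (fun z => b⁻¹ * (z - b)⁻¹ + (-b⁻¹ * (z - 0)⁻¹ + (z - 0)⁻¹ • (deriv q z / q z)))
          (Metric.sphere (0 : ℂ) r) := by
        intro z hz
        have hzr : ‖z‖ = r := (hsphere z).mp hz
        have hz0 : z ≠ 0 := hsne z hz
        have hzb : z ≠ b := hsnb z hz
        have hzρ : ‖z‖ < ρ := by rw [hzr]; exact hrρ
        have hqz0 : q z ≠ 0 := hqne z (le_of_eq hzr)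
        have hzb' : z - b ≠ 0 := sub_ne_zero.mpr hzb
        show deriv g z / (z * (g z - w)) = _
        rw [hderivgq z hzρ, hfac z]
        simp only [smul_eq_mul]
        field_simp
        ring
      have hc3 : ContinuousOn (fun z => deriv q z / q z) (Metric.closedBall (0 : ℂ) r) := by
        refine ContinuousOn.div ((hqan.deriv.continuousOn).mono hcsub)
          ((hqan.continuousOn).mono hcsub) ?_
        intro z hz
        exact hqne z (by simpa [Metric.mem_closedBall, Complex.dist_eq] using hz)
      have hci1 : CircleIntegrable (fun z => b⁻¹ * (z - b)⁻¹) 0 r := by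
        apply ContinuousOn.circleIntegrable hr0.le
        exact continuousOn_const.mul (((continuousOn_id).sub continuousOn_const).inv₀
          fun z hz => sub_ne_zero.mpr (hsnb z hz))
      have hci2 : CircleIntegrable (fun z => -b⁻¹ * (z - 0)⁻¹) 0 r := by
        apply ContinuousOn.circleIntegrable hr0.le
        exact continuousOn_const.mul (((continuousOn_id).sub continuousOn_const).inv₀
          fun z hz => sub_ne_zero.mpr (hsne z hz))
      have hci3 : CircleIntegrable (fun z => (z - 0)⁻¹ • (deriv q z / q z)) 0 r := by
        apply ContinuousOn.circleIntegrable hr0.le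
        exact (((continuousOn_id).sub continuousOn_const).inv₀
          fun z hz => sub_ne_zero.mpr (hsne z hz)).smul
          (hc3.mono Metric.sphere_subset_closedBall)
      have heval : (∮ z in C(0, r), deriv g z / (z * (g z - w))) =
          b⁻¹ * (2 * Real.pi * Complex.I) + (-b⁻¹ * (2 * Real.pi * Complex.I) +
            (2 * Real.pi * Complex.I) • (deriv q 0 / q 0)) := by
        rw [circleIntegral.integral_congr hr0.le hcongr]
        have hci23 : CircleIntegrable
            (fun z => -b⁻¹ * (z - 0)⁻¹ + (z - 0)⁻¹ • (deriv q z / q z)) 0 r := hci2.add hci3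
        rw [circleIntegral_add' hci1 hci23, circleIntegral_add' hci2 hci3]
        rw [circleIntegral.integral_const_mul, circleIntegral.integral_const_mul]
        rw [circleIntegral.integral_sub_inv_of_mem_ball hbball,
          circleIntegral.integral_sub_inv_of_mem_ball h0ball]
        have h3 : (∮ z in C(0, r), (z - 0)⁻¹ • (deriv q z / q z)) =
            (2 * Real.pi * Complex.I : ℂ) • (deriv q 0 / q 0) := by
          refine Complex.circleIntegral_sub_inv_smul_of_differentiable_on_off_countable
            Set.countable_empty h0ball hc3 ?_
          intro x hx
          have hxρ : ‖x‖ < ρ := by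
            have := hcsub (Metric.ball_subset_closedBall hx.1)
            simpa [Metric.mem_ball, Complex.dist_eq] using this
          exact ((hqan.deriv x ((hmemball x).mpr hxρ)).differentiableAt).div
            (hqda x hxρ) (hqne x (by
              have := Metric.ball_subset_closedBall hx.1
              simpa [Metric.mem_closedBall, Complex.dist_eq] using this))
        rw [h3]
      rw [hI_def]
      show (2 * Real.pi * Complex.I : ℂ)⁻¹ * _ = _
      rw [heval, hq0, hdq0, smul_eq_mul]
      rw [show b⁻¹ * (2 * (Real.pi : ℂ) * Complex.I) + (-b⁻¹ * (2 * (Real.pi : ℂ) * Complex.I) +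
          2 * (Real.pi : ℂ) * Complex.I * ((w / b - 1) / b / (w / b))) =
          2 * (Real.pi : ℂ) * Complex.I * ((w / b - 1) / b / (w / b)) from by ring]
      rw [← mul_assoc, ← mul_assoc, ← mul_assoc]
      rw [show (2 * (Real.pi : ℂ) * Complex.I)⁻¹ * 2 * Real.pi * Complex.I =
          (2 * (Real.pi : ℂ) * Complex.I)⁻¹ * (2 * Real.pi * Complex.I) from by ring,
        inv_mul_cancel₀ htwopi, one_mul]
      have hwb : w / b ≠ 0 := div_ne_zero hw0 hbne
      field_simp
    constructor
    · rw [hIw]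
      have h1 : 1 / w + (1 / b - 1 / w) = 1 / b := by ring
      rw [h1, ← hg b hbne hbρ.le, hgb]
    · -- the Laurent series expansion
      have hM0 : 0 ≤ M := le_trans (norm_nonneg _)
        (hMle (r : ℂ) (by rw [Complex.norm_real, Real.norm_eq_abs, abs_of_pos hr0]))
      have hwm1 : ‖w‖ / m < 1 := by rwa [div_lt_one hm0]
      -- facts about points on the sphere of radius r
      have hsphf : ∀ z : ℂ, ‖z‖ = r → z ≠ 0 ∧ ‖z‖ < ρ ∧ g z ≠ 0 ∧
          m ≤ ‖g z‖ ∧ g z - w ≠ 0 := by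
        intro z hz
        have hz0 : z ≠ 0 := by
          intro h
          rw [h] at hz
          simp only [norm_zero] at hz
          exact hr0.ne' hz.symm
        have hzρ : ‖z‖ < ρ := by rw [hz]; exact hrρ
        have hgz0 : g z ≠ 0 := hgne z hzρ.le hz0
        have hmz : m ≤ ‖g z‖ := hmle z (by rw [hz]; exact hsr.le) hz.le
        refine ⟨hz0, hzρ, hgz0, hmz, fun h => ?_⟩
        rw [sub_eq_zero] at h
        rw [h] at hmz
        exact absurd hwm (not_lt.mpr hmz)
      have hswap : HasSum
          (fun n : ℕ => ∮ z in C(0, r), deriv g z / (z * g z ^ (n + 1)) * w ^ n)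
          (∮ z in C(0, r), deriv g z / (z * (g z - w))) := by
        simp only [circleIntegral]
        have habscm : ∀ θ : ℝ, ‖circleMap 0 r θ‖ = r := fun θ => by
          rw [norm_circleMap_zero, abs_of_pos hr0]
        have hzc : Continuous (circleMap 0 r) := continuous_circleMap 0 r
        have hgc : Continuous fun θ => g (circleMap 0 r θ) := by
          apply hghol.continuousOn.comp_continuous hzc
          intro θ
          rw [Metric.mem_closedBall, Complex.dist_eq, sub_zero, habscm θ]
          exact hrρ.le
        have hdgc : Continuous fun θ => deriv g (circleMap 0 r θ) := by
          apply hdgan.continuousOn.comp_continuous hzc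
          intro θ
          rw [Metric.mem_ball, Complex.dist_eq, sub_zero, habscm θ]
          exact hrρ
        have hdcm : Continuous fun θ => deriv (circleMap 0 r) θ := by
          simp only [deriv_circleMap]
          exact hzc.mul continuous_const
        apply intervalIntegral.hasSum_integral_of_dominated_convergence
          (bound := fun n _ => (M / m) * (‖w‖ / m) ^ n)
        · intro n
          apply Continuous.aestronglyMeasurable
          apply hdcm.smul
          apply Continuous.mul _ continuous_const
          apply hdgc.div (hzc.mul (hgc.pow (n + 1)))
          intro θ
          obtain ⟨h1, _, h3, _, _⟩ := hsphf _ (habscm θ)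
          exact mul_ne_zero h1 (pow_ne_zero _ h3)
        · intro n
          apply Filter.Eventually.of_forall
          intro θ _
          obtain ⟨h1, h2, h3, h4, h5⟩ := hsphf _ (habscm θ)
          set z := circleMap 0 r θ with hz_def
          have habsz : ‖z‖ = r := habscm θ
          rw [norm_smul]
          have hd : ‖deriv (circleMap 0 r) θ‖ = r := by
            rw [deriv_circleMap, norm_mul]
            simp only [Complex.norm_I, mul_one, ← hz_def, habsz]
          rw [hd]
          have hnorm : ‖deriv g z / (z * g z ^ (n + 1)) * w ^ n‖ =
              ‖deriv g z‖ / (r * ‖g z‖ ^ (n + 1)) *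
                ‖w‖ ^ n := by
            rw [norm_mul, norm_div, norm_mul, norm_pow, norm_pow]
            simp only [habsz]
          rw [hnorm]
          have h6 : r * (‖deriv g z‖ / (r * ‖g z‖ ^ (n + 1)) *
              ‖w‖ ^ n) =
              ‖deriv g z‖ * ‖w‖ ^ n / ‖g z‖ ^ (n + 1) := by
            have habsgz : ‖g z‖ ≠ 0 := ne_of_gt (lt_of_lt_of_le hm0 h4)
            field_simp [hr0.ne']
          have h7 : M / m * (‖w‖ / m) ^ n =
              M * ‖w‖ ^ n / m ^ (n + 1) := by
            rw [div_pow, div_mul_div_comm, ← pow_succ']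
          rw [h6, h7]
          have hpow : m ^ (n + 1) ≤ ‖g z‖ ^ (n + 1) :=
            pow_le_pow_left₀ hm0.le h4 _
          gcongr
          exact hMle z habsz
        · apply Filter.Eventually.of_forall
          intro θ
          exact fun _ => (summable_geometric_of_lt_one (by positivity) hwm1).mul_left _
        · exact intervalIntegrable_const
        · apply Filter.Eventually.of_forall
          intro θ _
          obtain ⟨h1, h2, h3, h4, h5⟩ := hsphf _ (habscm θ)
          set z := circleMap 0 r θ with hz_def
          have hlt : ‖w / g z‖ < 1 := by
            rw [norm_div, div_lt_one (lt_of_lt_of_le hm0 h4)]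
            exact lt_of_lt_of_le hwm h4
          have hgeo := (hasSum_geometric_of_norm_lt_one hlt).mul_left
            (deriv (circleMap 0 r) θ • (deriv g z / (z * g z)))
          have hfun : ∀ n : ℕ, deriv (circleMap 0 r) θ • (deriv g z / (z * g z)) * (w / g z) ^ n
              = deriv (circleMap 0 r) θ • (deriv g z / (z * g z ^ (n + 1)) * w ^ n) := by
            intro n
            rw [smul_eq_mul, smul_eq_mul, div_pow]
            field_simp
            ring
          have h15 : (1 : ℂ) - w / g z ≠ 0 := by
            rw [show (1 : ℂ) - w / g z = (g z - w) / g z from by field_simp]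
            exact div_ne_zero h5 h3
          have hval : deriv (circleMap 0 r) θ • (deriv g z / (z * g z)) * (1 - w / g z)⁻¹
              = deriv (circleMap 0 r) θ • (deriv g z / (z * (g z - w))) := by
            rw [smul_eq_mul, smul_eq_mul]
            field_simp
          rw [← hval]
          exact hgeo.congr_fun fun n => (hfun n).symm
      -- pull the constants out of the integrals
      have hswap2 : HasSum (fun n : ℕ =>
          (2 * Real.pi * Complex.I)⁻¹ *
            ((∮ z in C(0, r), deriv g z / (z * g z ^ (n + 1))) * w ^ n)) (I w) := by
        have h1 : ∀ n : ℕ, (∮ z in C(0, r), deriv g z / (z * g z ^ (n + 1)) * w ^ n)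
            = (∮ z in C(0, r), deriv g z / (z * g z ^ (n + 1))) * w ^ n := by
          intro n
          have h2 := circleIntegral.integral_smul_const
            (fun z => deriv g z / (z * g z ^ (n + 1))) (w ^ n) 0 r
          simpa [smul_eq_mul] using h2
        have h2 := hswap.mul_left ((2 * Real.pi * Complex.I : ℂ)⁻¹)
        rw [hI_def]
        refine HasSum.congr_fun h2 fun n => ?_
        rw [h1 n]
      -- the 0-th coefficient equals a 1
      have hJ0 : (∮ z in C(0, r), deriv g z / (z * g z ^ (0 + 1))) =
          2 * Real.pi * Complex.I * a 1 := by
        have hcongr0 : Set.EqOn (fun z => deriv g z / (z * g z ^ (0 + 1)))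
            (fun z => (z - 0)⁻¹ • (deriv u z / u z) + (z - 0) ^ (-2 : ℤ))
            (Metric.sphere (0 : ℂ) r) := by
          intro z hz
          have hzr := (hsphere z).mp hz
          obtain ⟨hz0, hzρ, hgz0, -, -⟩ := hsphf z hzr
          have huz : u z ≠ 0 := hune0 z hzρ.le
          show deriv g z / (z * g z ^ (0 + 1)) = _
          rw [pow_one, hderivg z hzρ, hgu z]
          simp only [smul_eq_mul, sub_zero, zpow_neg]
          rw [show ((2 : ℤ) : ℤ) = (2 : ℕ) from rfl, zpow_natCast]
          field_simp
          ring
        rw [circleIntegral.integral_congr hr0.le hcongr0]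
        have hcu : ContinuousOn (fun z => deriv u z / u z) (Metric.closedBall (0 : ℂ) r) := by
          refine ContinuousOn.div ((huan.deriv.continuousOn).mono hcsub)
            ((huan.continuousOn).mono hcsub) ?_
          intro z hz
          refine hune0 z ?_
          have := hcsub hz
          rw [hmemball] at this
          exact this.le
        have hciA : CircleIntegrable (fun z => (z - 0)⁻¹ • (deriv u z / u z)) 0 r := by
          apply ContinuousOn.circleIntegrable hr0.le
          exact (((continuousOn_id).sub continuousOn_const).inv₀
            fun z hz => sub_ne_zero.mpr (hsne z hz)).smul
            (hcu.mono Metric.sphere_subset_closedBall)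
        have hciB : CircleIntegrable (fun z => (z - 0) ^ (-2 : ℤ)) 0 r := by
          apply ContinuousOn.circleIntegrable hr0.le
          exact ((continuousOn_id).sub continuousOn_const).zpow₀ (-2)
            fun z hz => Or.inl (sub_ne_zero.mpr (hsne z hz))
        rw [circleIntegral_add' hciA hciB]
        rw [circleIntegral.integral_sub_zpow_of_ne (by decide) 0 0 r]
        have h3 := Complex.circleIntegral_sub_inv_smul_of_differentiable_on_off_countable
          Set.countable_empty h0ball hcu (fun x hx => ?_)
        · rw [h3, hu0, hderivu0]
          simp [smul_eq_mul]
        · have hxρ : ‖x‖ < ρ := by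
            have := hcsub (Metric.ball_subset_closedBall hx.1)
            rwa [hmemball] at this
          refine ((huan.deriv x ((hmemball x).mpr hxρ)).differentiableAt).div
            (huda x hxρ) (hune0 x hxρ.le)
      -- deformation of the contour from ρ to r
      have hannmem : ∀ z : ℂ, z ∈ Metric.closedBall (0 : ℂ) ρ \ Metric.ball 0 r →
          r ≤ ‖z‖ ∧ ‖z‖ ≤ ρ := by
        intro z hz
        constructor
        · have := hz.2
          rw [Metric.mem_ball, Complex.dist_eq, sub_zero] at this
          exact not_lt.mp this
        · exact (hball z).mp hz.1
      have hann : ∀ n : ℕ, (∮ z in C(0, ρ), 1 / (z ^ 2 * g z ^ (n + 1))) =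
          ∮ z in C(0, r), 1 / (z ^ 2 * g z ^ (n + 1)) := by
        intro n
        apply circleIntegral_eq_of_differentiable_on_annulus_off_countable hr0 hrρ.le
          Set.countable_empty
        · refine ContinuousOn.div continuousOn_const ?_ ?_
          · exact ((continuousOn_id).pow 2).mul
              ((hghol.continuousOn.mono fun z hz => hz.1).pow (n + 1))
          · intro z hz
            obtain ⟨h1, h2⟩ := hannmem z hz
            have hz0 : z ≠ 0 := by
              intro h
              rw [h] at h1
              simp only [norm_zero] at h1
              exact absurd h1 (not_le.mpr hr0)
            exact mul_ne_zero (pow_ne_zero _ hz0) (pow_ne_zero _ (hgne z h2 hz0))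
        · intro z hz
          have hzρ : ‖z‖ < ρ := by
            have := hz.1.1
            rwa [hmemball] at this
          have hz0 : z ≠ 0 := by
            intro h
            have := hz.1.2
            rw [h] at this
            exact this (by simpa [Metric.mem_closedBall] using hr0.le)
          exact (differentiableAt_const _).div
            ((differentiableAt_id.pow 2).mul ((hgda z hzρ).pow (n + 1)))
            (mul_ne_zero (pow_ne_zero _ hz0) (pow_ne_zero _ (hgne z hzρ.le hz0)))
      -- integration by parts identity
      have hIBP : ∀ n : ℕ,
          (∮ z in C(0, r), 1 / (z ^ 2 * g z ^ (n + 1))) +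
            ((n : ℂ) + 1) * (∮ z in C(0, r), deriv g z / (z * g z ^ (n + 2))) = 0 := by
        intro n
        have hciA : CircleIntegrable (fun z => 1 / (z ^ 2 * g z ^ (n + 1))) 0 r := by
          apply ContinuousOn.circleIntegrable hr0.le
          refine ContinuousOn.div continuousOn_const ?_ ?_
          · exact ((continuousOn_id).pow 2).mul
              (((hghol.continuousOn.mono (fun z hz =>
                Metric.closedBall_subset_closedBall hrρ.le
                  (Metric.sphere_subset_closedBall hz))).mono
                (subset_refl _)).pow (n + 1))
          · intro z hz
            obtain ⟨hz0, hzρ, hgz0, -, -⟩ := hsphf z ((hsphere z).mp hz)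
            exact mul_ne_zero (pow_ne_zero _ hz0) (pow_ne_zero _ hgz0)
        have hciB : CircleIntegrable
            (fun z => ((n : ℂ) + 1) * (deriv g z / (z * g z ^ (n + 2)))) 0 r := by
          apply ContinuousOn.circleIntegrable hr0.le
          refine continuousOn_const.mul (ContinuousOn.div
            ((hdgan.continuousOn).mono hsp) ?_ ?_)
          · exact (continuousOn_id).mul
              (((hghol.continuousOn.mono (fun z hz =>
                Metric.closedBall_subset_closedBall hrρ.le
                  (Metric.sphere_subset_closedBall hz)))).pow (n + 2))
          · intro z hz
            obtain ⟨hz0, hzρ, hgz0, -, -⟩ := hsphf z ((hsphere z).mp hz)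
            exact mul_ne_zero hz0 (pow_ne_zero _ hgz0)
        have hzero' : (∮ z in C(0, r), (1 / (z ^ 2 * g z ^ (n + 1)) +
            ((n : ℂ) + 1) * (deriv g z / (z * g z ^ (n + 2))))) = 0 := by
          apply circleIntegral.integral_eq_zero_of_hasDerivWithinAt
            (f := fun y => -(y * g y ^ (n + 1))⁻¹) hr0.le
          intro z hz
          obtain ⟨hz0, hzρ, hgz0, -, -⟩ := hsphf z ((hsphere z).mp hz)
          have h1 : HasDerivAt (fun y => y * g y ^ (n + 1))
              (1 * g z ^ (n + 1) + z * (((n : ℕ) + 1 : ℂ) * g z ^ n * deriv g z)) z := by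
            refine (hasDerivAt_id z).mul ?_
            have h2 := ((hgda z hzρ).hasDerivAt).pow (n + 1)
            norm_num at h2 ⊢
            convert h2 using 2
            rfl
          have h2 := (h1.inv (mul_ne_zero hz0 (pow_ne_zero _ hgz0))).neg
          have h3 : -(-(1 * g z ^ (n + 1) + z * (((n : ℕ) + 1 : ℂ) * g z ^ n * deriv g z)) /
              (z * g z ^ (n + 1)) ^ 2) =
              1 / (z ^ 2 * g z ^ (n + 1)) +
                ((n : ℂ) + 1) * (deriv g z / (z * g z ^ (n + 2))) := by
            field_simp
            ring
          rw [h3] at h2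
          exact h2.hasDerivWithinAt
        rw [circleIntegral_add' hciA hciB, circleIntegral.integral_const_mul] at hzero'
        exact hzero'
      -- assembling the Laurent series
      have hsum0 : (2 * Real.pi * Complex.I : ℂ)⁻¹ *
          ((∮ z in C(0, r), deriv g z / (z * g z ^ (0 + 1))) * w ^ 0) = a 1 := by
        rw [hJ0, pow_zero, mul_one, ← mul_assoc, inv_mul_cancel₀ htwopi, one_mul]
      have hfinal : HasSum (fun n : ℕ =>
          (2 * Real.pi * Complex.I)⁻¹ *
            ((∮ z in C(0, r), deriv g z / (z * g z ^ (n + 1 + 1))) * w ^ (n + 1)))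
          (I w - a 1) := by
        refine (hasSum_nat_add_iff (f := fun k : ℕ => (2 * Real.pi * Complex.I : ℂ)⁻¹ *
          ((∮ z in C(0, r), deriv g z / (z * g z ^ (k + 1))) * w ^ k)) 1).mpr ?_
        rw [Finset.sum_range_one, hsum0]
        have : I w - a 1 + a 1 = I w := by ring
        rw [this]
        exact hswap2
      have hvaleq : 1 / w + I w - 1 / w - a 1 = I w - a 1 := by ring
      rw [hvaleq]
      refine HasSum.congr_fun hfinal fun n => ?_
      have hc : ((n : ℂ) + 1) ≠ 0 := Nat.cast_add_one_ne_zero n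
      rw [hann n]
      have hB : (∮ z in C(0, r), deriv g z / (z * g z ^ (n + 1 + 1))) =
          -(∮ z in C(0, r), 1 / (z ^ 2 * g z ^ (n + 1))) / ((n : ℂ) + 1) := by
        have h := hIBP n
        rw [show n + 2 = n + 1 + 1 from rfl] at h
        field_simp
        linear_combination h
      rw [hB]
      ring
  exact ⟨min ε₁ m, lt_min hε₁0 hm0, fun w => 1 / w + I w,
    fun w h1 h2 => (key w h1 h2).1, fun w h1 h2 => (key w h1 h2).2⟩
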